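/- Let S be a slice of an LBFS of a graph G with maximal subslices x, S_1, ..., S_k in order, with N(x) ∩ S ≠ ∅. Then for every i > 1 such that S_i contains a vertex with an incident active edge for S, there exists a vertex y in some S_ℓ with ℓ < i that is adjacent to every vertex of S_i. -/

import Mathlib

/-- The LBFS label of vertex `v` just before step `t`: for each earlier step `i < t`
(in increasing order of `i`) at which a neighbour of `v` was explored, the value `n - i`
is appended. -/
def lbfsLabel {V : Type*} (G : SimpleGraph V) [DecidableRel G.Adj] (σ : ℕ → V)
    (n t : ℕ) (v : V) : List ℕ :=
  ((List.range t).filter (fun i => decide (G.Adj (σ i) v))).map (fun i => n - i)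

/-- `σ` (restricted to `[0,n)`) is a Lexicographic Breadth-First Search ordering of `G`:
it enumerates all vertices, and at each step the chosen vertex has lexicographically
largest label among the unexplored vertices. -/
def IsLBFS {V : Type*} (G : SimpleGraph V) [DecidableRel G.Adj] (n : ℕ) (σ : ℕ → V) : Prop :=
  Set.BijOn σ (Set.Iio n) Set.univ ∧
    ∀ t < n, ∀ v : V, (∀ i < t, σ i ≠ v) →
      ¬ List.Lex (· < ·) (lbfsLabel G σ n t (σ t)) (lbfsLabel G σ n t v)

/-- The slice defined at step `t`: the unexplored vertices sharing the (lexicographically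
largest) label of the chosen vertex `σ t` just before step `t`. -/
def sliceAt {V : Type*} (G : SimpleGraph V) [DecidableRel G.Adj] (σ : ℕ → V) (n t : ℕ) :
    Set V :=
  {v | (∀ i < t, σ i ≠ v) ∧ lbfsLabel G σ n t v = lbfsLabel G σ n t (σ t)}

/-- `S` is a slice of the LBFS. -/
def IsSlice {V : Type*} (G : SimpleGraph V) [DecidableRel G.Adj] (σ : ℕ → V) (n : ℕ)
    (S : Set V) : Prop :=
  ∃ t < n, S = sliceAt G σ n t

/-- The slice defined at step `u` is a maximal (proper) subslice of the slice at step `t`. -/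
def IsMaxSubsliceAt {V : Type*} (G : SimpleGraph V) [DecidableRel G.Adj] (σ : ℕ → V)
    (n t u : ℕ) : Prop :=
  u < n ∧ sliceAt G σ n u ⊂ sliceAt G σ n t ∧
    ∀ w < n, ¬(sliceAt G σ n u ⊂ sliceAt G σ n w ∧ sliceAt G σ n w ⊂ sliceAt G σ n t)

/-- `u 1, …, u k` are the steps defining the maximal subslices `S_1, …, S_k` of the slice
at step `t`, listed in the order the LBFS defines them (the initial vertex `σ t`, as a
singleton, being by convention the zeroth maximal subslice). -/
def MaxSubsliceEnum {V : Type*} (G : SimpleGraph V) [DecidableRel G.Adj] (σ : ℕ → V)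
    (n t k : ℕ) (u : ℕ → ℕ) : Prop :=
  (∀ i, 1 ≤ i → i ≤ k → IsMaxSubsliceAt G σ n t (u i)) ∧
  (∀ i j, 1 ≤ i → i < j → j ≤ k → u i < u j) ∧
  (∀ i, 1 ≤ i → i ≤ k → t < u i) ∧
  (∀ w, w < n → IsMaxSubsliceAt G σ n t w →
    ∃ i, 1 ≤ i ∧ i ≤ k ∧ sliceAt G σ n w = sliceAt G σ n (u i))

/-- The edge `ab` is active for the slice at step `t`: both endpoints lie in that slice
but in different maximal subslices of it (i.e. no maximal subslice contains both). -/
def activeFor {V : Type*} (G : SimpleGraph V) [DecidableRel G.Adj] (σ : ℕ → V)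
    (n t : ℕ) (a b : V) : Prop :=
  G.Adj a b ∧ a ∈ sliceAt G σ n t ∧ b ∈ sliceAt G σ n t ∧
    ∀ w, IsMaxSubsliceAt G σ n t w → ¬(a ∈ sliceAt G σ n w ∧ b ∈ sliceAt G σ n w)
/-- `d` is a transitive orientation of the subgraph of `G` induced on `S`:
each edge of `G[S]` gets exactly one direction, and directions compose transitively. -/
def IsTransOrientationOn {V : Type*} (G : SimpleGraph V) (S : Set V)
    (d : V → V → Prop) : Prop :=
  (∀ a b, d a b → G.Adj a b ∧ a ∈ S ∧ b ∈ S) ∧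
  (∀ a b, G.Adj a b → a ∈ S → b ∈ S → d a b ∨ d b a) ∧
  (∀ a b, d a b → ¬ d b a) ∧
  (∀ a b c, d a b → d b c → d a c)

/-- `M` is a module of `G`: every vertex outside `M` is adjacent to all of `M` or to
none of `M`. -/
def IsModule {V : Type*} (G : SimpleGraph V) (M : Set V) : Prop :=
  ∀ v ∉ M, (∀ m ∈ M, G.Adj v m) ∨ (∀ m ∈ M, ¬ G.Adj v m)

/-- `G` is prime: it has no non-trivial module. -/
def IsPrimeGraph {V : Type*} (G : SimpleGraph V) : Prop :=
  ∀ M : Set V, IsModule G M → M.Subsingleton ∨ M = Set.univ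

/-- `C` is a connected component of the subgraph of `G` induced on `S`. -/
def IsComponentOn {V : Type*} (G : SimpleGraph V) (S C : Set V) : Prop :=
  C ⊆ S ∧ C.Nonempty ∧
  (∀ a ∈ C, ∀ b ∈ C, Relation.ReflTransGen (fun p q => p ∈ S ∧ q ∈ S ∧ G.Adj p q) a b) ∧
  (∀ a ∈ C, ∀ b ∈ S, G.Adj a b → b ∈ C)

/-- `C` is a co-component of `G[S]`: a connected component of the complement of the
subgraph of `G` induced on `S`. -/
def IsCoComponentOn {V : Type*} (G : SimpleGraph V) (S C : Set V) : Prop :=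
  C ⊆ S ∧ C.Nonempty ∧
  (∀ a ∈ C, ∀ b ∈ C,
    Relation.ReflTransGen (fun p q => p ∈ S ∧ q ∈ S ∧ p ≠ q ∧ ¬ G.Adj p q) a b) ∧
  (∀ a ∈ C, ∀ b ∈ S, a ≠ b → ¬ G.Adj a b → b ∈ C)
section Aux

-- pure list lemmas
lemma lex_trichotomy (a b : List ℕ) :
    List.Lex (· < ·) a b ∨ a = b ∨ List.Lex (· < ·) b a := by
  induction a generalizing b with
  | nil => cases b with
    | nil => exact Or.inr (Or.inl rfl)
    | cons y ys => exact Or.inl List.Lex.nil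
  | cons x xs ih =>
    cases b with
    | nil => exact Or.inr (Or.inr List.Lex.nil)
    | cons y ys =>
      rcases Nat.lt_trichotomy x y with h | h | h
      · exact Or.inl (List.Lex.rel h)
      · subst h
        rcases ih ys with h' | h' | h'
        · exact Or.inl (List.Lex.cons h')
        · exact Or.inr (Or.inl (by rw [h']))
        · exact Or.inr (Or.inr (List.Lex.cons h'))
      · exact Or.inr (Or.inr (List.Lex.rel h))

lemma lex_append_big {a b c d : List ℕ} (h : List.Lex (· < ·) a b)
    (hbc : ∀ x ∈ b, ∀ y ∈ c, y < x) : List.Lex (· < ·) (a ++ c) (b ++ d) := by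
  induction h with
  | nil =>
    rename_i y ys
    cases c with
    | nil => exact List.Lex.nil
    | cons z zs =>
      exact List.Lex.rel (hbc y List.mem_cons_self z List.mem_cons_self)
  | @cons x l1 l2 h ih =>
    exact List.Lex.cons (ih (fun x hx y hy => hbc x (List.mem_cons_of_mem _ hx) y hy))
  | rel h =>
    exact List.Lex.rel h

lemma lex_append_cons (l : List ℕ) (e : ℕ) (es : List ℕ) :
    List.Lex (· < ·) l (l ++ e :: es) := by
  induction l with
  | nil => exact List.Lex.nil
  | cons x xs ih => exact List.Lex.cons ih


variable {V : Type*} (G : SimpleGraph V) [DecidableRel G.Adj] (σ : ℕ → V) (n : ℕ)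

/-- Two vertices have the same adjacency pattern to the first `s` explored vertices. -/
def LbfsEqv (s : ℕ) (v w : V) : Prop := ∀ i < s, (G.Adj (σ i) v ↔ G.Adj (σ i) w)

variable {G σ n}

lemma mem_lbfsLabel {s : ℕ} {z : V} {x : ℕ} :
    x ∈ lbfsLabel G σ n s z ↔ ∃ i, i < s ∧ G.Adj (σ i) z ∧ x = n - i := by
  simp only [lbfsLabel, List.mem_map, List.mem_filter, List.mem_range, decide_eq_true_eq]
  constructor
  · rintro ⟨i, ⟨h1, h2⟩, rfl⟩; exact ⟨i, h1, h2, rfl⟩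
  · rintro ⟨i, h1, h2, rfl⟩; exact ⟨i, ⟨h1, h2⟩, rfl⟩

lemma label_eq_iff {s : ℕ} (hs : s ≤ n) {v w : V} :
    lbfsLabel G σ n s v = lbfsLabel G σ n s w ↔ LbfsEqv G σ s v w := by
  constructor
  · intro h
    have hrec : ∀ z : V, ((List.range s).filter (fun i => decide (G.Adj (σ i) z)))
        = (lbfsLabel G σ n s z).map (fun m => n - m) := by
      intro z
      rw [lbfsLabel, List.map_map]
      symm
      calc ((List.range s).filter (fun i => decide (G.Adj (σ i) z))).map
            ((fun m => n - m) ∘ fun i => n - i)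
          = ((List.range s).filter (fun i => decide (G.Adj (σ i) z))).map id := by
            apply List.map_congr_left
            intro x hx
            have : x < s := List.mem_range.1 (List.mem_of_mem_filter hx)
            simp only [Function.comp, id]
            omega
        _ = _ := List.map_id _
    have hF : ((List.range s).filter (fun i => decide (G.Adj (σ i) v)))
        = ((List.range s).filter (fun i => decide (G.Adj (σ i) w))) := by
      rw [hrec v, hrec w, h]
    intro i hi
    constructor
    · intro hadj
      have : i ∈ (List.range s).filter (fun i => decide (G.Adj (σ i) w)) := by
        rw [← hF]; simp [List.mem_filter, List.mem_range, hi, hadj]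
      exact (by simpa [List.mem_filter] using this : i < s ∧ G.Adj (σ i) w).2
    · intro hadj
      have : i ∈ (List.range s).filter (fun i => decide (G.Adj (σ i) v)) := by
        rw [hF]; simp [List.mem_filter, List.mem_range, hi, hadj]
      exact (by simpa [List.mem_filter] using this : i < s ∧ G.Adj (σ i) v).2
  · intro h
    unfold lbfsLabel
    congr 1
    apply List.filter_congr
    intro i hi
    have := h i (List.mem_range.1 hi)
    simp [this]

lemma label_succ (s : ℕ) (z : V) :
    lbfsLabel G σ n (s + 1) z
      = lbfsLabel G σ n s z ++ (if G.Adj (σ s) z then [n - s] else []) := by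
  unfold lbfsLabel
  rw [List.range_succ, List.filter_append, List.map_append]
  congr 1
  by_cases h : G.Adj (σ s) z <;> simp [h]



lemma label_mem_lt {s : ℕ} (hs : s ≤ n) {z : V} {x : ℕ} (hx : x ∈ lbfsLabel G σ n s z) :
    n - s < x := by
  obtain ⟨i, hi, _, rfl⟩ := mem_lbfsLabel.1 hx
  omega

/-- Strict lex comparison of labels is preserved as the LBFS proceeds. -/
lemma lex_label_mono {w s : ℕ} (hws : w ≤ s) (hs : s ≤ n) {a b : V}
    (h : List.Lex (· < ·) (lbfsLabel G σ n w a) (lbfsLabel G σ n w b)) :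
    List.Lex (· < ·) (lbfsLabel G σ n s a) (lbfsLabel G σ n s b) := by
  induction s with
  | zero =>
    have : w = 0 := Nat.le_zero.1 hws
    subst this; exact h
  | succ s ih =>
    rcases Nat.lt_or_ge w (s + 1) with hw | hw
    · have hws' : w ≤ s := by omega
      have hlex : List.Lex (· < ·) (lbfsLabel G σ n s a) (lbfsLabel G σ n s b) :=
        ih hws' (by omega)
      rw [label_succ, label_succ]
      apply lex_append_big hlex
      intro x hx y hy
      have hx' : n - s < x := label_mem_lt (by omega) hx
      have : y = n - s := by
        rcases (by by_cases hc : G.Adj (σ s) a <;> simp [hc] at hy ⊢; exact hy :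
          y = n - s ∨ y ∈ ([] : List ℕ)) with h' | h'
        · exact h'
        · simp at h'
      omega
    · have : w = s + 1 := by omega
      subst this; exact h

lemma lbfs_inj (hL : IsLBFS G n σ) {i j : ℕ} (hi : i < n) (hj : j < n)
    (h : σ i = σ j) : i = j :=
  hL.1.2.1 (by simpa using hi) (by simpa using hj) h

lemma unexp (hL : IsLBFS G n σ) {r s : ℕ} (hs : s < n) (hrs : r ≤ s) :
    ∀ i < r, σ i ≠ σ s := by
  intro i hi hne
  have := lbfs_inj hL (by omega) hs hne
  omega

lemma self_mem_slice (hL : IsLBFS G n σ) {t : ℕ} (ht : t < n) :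
    σ t ∈ sliceAt G σ n t :=
  ⟨unexp hL ht le_rfl, rfl⟩

lemma start_le (hL : IsLBFS G n σ) {w s : ℕ} (hs : s < n)
    (h : σ s ∈ sliceAt G σ n w) : w ≤ s := by
  by_contra hc
  exact h.1 s (by omega) rfl

lemma explored_not_mem {t s : ℕ} (hts : t < s) : σ t ∉ sliceAt G σ n s := by
  intro h
  exact h.1 t hts rfl

/-- Persistence: while a slice has unexplored vertices, the LBFS picks from it. -/
lemma persistence (hL : IsLBFS G n σ) {w s : ℕ} (hws : w ≤ s) (hsn : s < n) {v : V}
    (hv : v ∈ sliceAt G σ n w) (hun : ∀ i < s, σ i ≠ v) :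
    σ s ∈ sliceAt G σ n w := by
  rcases eq_or_lt_of_le hws with rfl | hws'
  · exact self_mem_slice hL hsn
  have hunw : ∀ i < w, σ i ≠ σ s := unexp hL hsn (le_of_lt hws')
  rcases lex_trichotomy (lbfsLabel G σ n w (σ s)) (lbfsLabel G σ n w (σ w)) with h | h | h
  · exfalso
    have h1 : List.Lex (· < ·) (lbfsLabel G σ n w (σ s)) (lbfsLabel G σ n w v) := by
      rwa [hv.2]
    have h2 := lex_label_mono hws (le_of_lt hsn) h1
    exact hL.2 s hsn v hun h2
  · exact ⟨hunw, h⟩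
  · exact absurd h (hL.2 w (by omega) (σ s) hunw)

/-- A slice started inside another slice is contained in it. -/
lemma slice_subset (hL : IsLBFS G n σ) {t s : ℕ} (hts : t ≤ s) (hsn : s ≤ n)
    (h : σ s ∈ sliceAt G σ n t) : sliceAt G σ n s ⊆ sliceAt G σ n t := by
  intro z hz
  refine ⟨fun i hi => hz.1 i (by omega), ?_⟩
  have e1 : LbfsEqv G σ s z (σ s) := (label_eq_iff hsn).1 hz.2
  have e2 : LbfsEqv G σ t (σ s) (σ t) := (label_eq_iff (le_trans hts hsn)).1 h.2
  refine (label_eq_iff (le_trans hts hsn)).2 ?_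
  intro i hi
  exact Iff.trans (e1 i (by omega)) (e2 i hi)

/-- Nesting: if an earlier-started slice shares a vertex with a later one, it contains it. -/
lemma nesting (hL : IsLBFS G n σ) {w t : ℕ} (hwt : w ≤ t) (htn : t ≤ n) {v : V}
    (hvw : v ∈ sliceAt G σ n w) (hvt : v ∈ sliceAt G σ n t) :
    sliceAt G σ n t ⊆ sliceAt G σ n w := by
  intro z hz
  refine ⟨fun i hi => hz.1 i (by omega), ?_⟩
  have e1 : LbfsEqv G σ t z (σ t) := (label_eq_iff htn).1 hz.2
  have e2 : LbfsEqv G σ t v (σ t) := (label_eq_iff htn).1 hvt.2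
  have e3 : LbfsEqv G σ w v (σ w) := (label_eq_iff (le_trans hwt htn)).1 hvw.2
  refine (label_eq_iff (le_trans hwt htn)).2 ?_
  intro i hi
  exact Iff.trans (Iff.trans (e1 i (by omega)) (e2 i (by omega)).symm) (e3 i hi)

end Aux

section Aux2
variable {V : Type*} {G : SimpleGraph V} [DecidableRel G.Adj] {σ : ℕ → V} {n : ℕ}

/-- Two maximal subslices sharing a vertex are equal. -/
lemma maxEq (hL : IsLBFS G n σ) {t a b : ℕ} {v : V}
    (ha : IsMaxSubsliceAt G σ n t a) (hb : IsMaxSubsliceAt G σ n t b)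
    (hva : v ∈ sliceAt G σ n a) (hvb : v ∈ sliceAt G σ n b) :
    sliceAt G σ n a = sliceAt G σ n b := by
  rcases le_total a b with hab | hab
  · have hsub : sliceAt G σ n b ⊆ sliceAt G σ n a :=
      nesting hL hab (le_of_lt hb.1) hva hvb
    by_contra hne
    have hss : sliceAt G σ n b ⊂ sliceAt G σ n a := hsub.ssubset_of_ne (Ne.symm hne)
    exact hb.2.2 a ha.1 ⟨hss, ha.2.1⟩
  · have hsub : sliceAt G σ n a ⊆ sliceAt G σ n b :=
      nesting hL hab (le_of_lt ha.1) hvb hva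
    by_contra hne
    have hss : sliceAt G σ n a ⊂ sliceAt G σ n b := hsub.ssubset_of_ne hne
    exact ha.2.2 b hb.1 ⟨hss, hb.2.1⟩

/-- Every vertex of the slice explored strictly after `t` lies in some maximal subslice. -/
lemma maxCover (hL : IsLBFS G n σ) {t k : ℕ} {u : ℕ → ℕ} (ht : t < n)
    (hu : MaxSubsliceEnum G σ n t k u) {s : ℕ} (hts : t < s) (hsn : s < n)
    (hmem : σ s ∈ sliceAt G σ n t) :
    ∃ ℓ, 1 ≤ ℓ ∧ ℓ ≤ k ∧ σ s ∈ sliceAt G σ n (u ℓ) ∧ u ℓ ≤ s := by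
  classical
  have hex : ∃ w, w < n ∧ σ s ∈ sliceAt G σ n w ∧ sliceAt G σ n w ⊂ sliceAt G σ n t := by
    refine ⟨s, hsn, self_mem_slice hL hsn, ?_⟩
    refine (slice_subset hL (le_of_lt hts) (le_of_lt hsn) hmem).ssubset_of_ne ?_
    intro he
    exact explored_not_mem hts (he ▸ self_mem_slice hL ht)
  let w := Nat.find hex
  obtain ⟨hwn, hwmem, hwss⟩ : w < n ∧ σ s ∈ sliceAt G σ n w ∧
      sliceAt G σ n w ⊂ sliceAt G σ n t := Nat.find_spec hex
  have hmax : IsMaxSubsliceAt G σ n t w := by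
    refine ⟨hwn, hwss, ?_⟩
    rintro w' hw'n ⟨h1, h2⟩
    have hmemw' : σ s ∈ sliceAt G σ n w' := h1.subset hwmem
    have hle : w ≤ w' := Nat.find_min' hex ⟨hw'n, hmemw', h2⟩
    have hσw : σ w ∈ sliceAt G σ n w' := h1.subset (self_mem_slice hL hwn)
    have hge : w' ≤ w := start_le hL hwn hσw
    have : w = w' := le_antisymm hle hge
    subst this
    exact h1.ne rfl
  obtain ⟨ℓ, hℓ1, hℓk, heq⟩ := hu.2.2.2 w hwn hmax
  refine ⟨ℓ, hℓ1, hℓk, heq ▸ hwmem, start_le hL hsn (heq ▸ hwmem)⟩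

/-- No vertex of `S_i` for `i > 1` is adjacent to the initial vertex `σ t`. -/
lemma lemC (hL : IsLBFS G n σ) {t k i : ℕ} {u : ℕ → ℕ} (ht : t < n)
    (hu : MaxSubsliceEnum G σ n t k u) (hi1 : 1 < i) (hik : i ≤ k) {v₀ : V}
    (hv₀ : v₀ ∈ sliceAt G σ n (u i)) (hadj : G.Adj (σ t) v₀) : False := by
  have hmaxi : IsMaxSubsliceAt G σ n t (u i) := hu.1 i (by omega) hik
  have huin : u i < n := hmaxi.1
  have htui : t < u i := hu.2.2.1 i (by omega) hik
  have ht1n : t + 1 < n := by omega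
  have hv₀t : v₀ ∈ sliceAt G σ n t := hmaxi.2.1.subset hv₀
  have hv₀ne : σ t ≠ v₀ := hadj.ne
  have hunex : ∀ j < t + 1, σ j ≠ v₀ := by
    intro j hj
    rcases Nat.lt_or_ge j t with h | h
    · exact hv₀t.1 j h
    · have : j = t := by omega
      subst this; exact hv₀ne
  have hσt1 : σ (t + 1) ∈ sliceAt G σ n t :=
    persistence hL (by omega) ht1n hv₀t hunex
  have hadj1 : G.Adj (σ t) (σ (t + 1)) := by
    by_contra hcon
    have h1 : lbfsLabel G σ n (t + 1) (σ (t + 1)) = lbfsLabel G σ n t v₀ := by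
      rw [label_succ, if_neg hcon, List.append_nil, hσt1.2, ← hv₀t.2]
    have h2 : lbfsLabel G σ n (t + 1) v₀ = lbfsLabel G σ n t v₀ ++ [n - t] := by
      rw [label_succ, if_pos hadj]
    have hlex : List.Lex (· < ·) (lbfsLabel G σ n (t + 1) (σ (t + 1)))
        (lbfsLabel G σ n (t + 1) v₀) := by
      rw [h1, h2]; exact lex_append_cons _ _ _
    exact hL.2 (t + 1) ht1n v₀ hunex hlex
  have hv₀1 : v₀ ∈ sliceAt G σ n (t + 1) := by
    refine ⟨hunex, ?_⟩
    rw [label_succ, label_succ, if_pos hadj, if_pos hadj1, hv₀t.2, ← hσt1.2]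
  have hmax1 : IsMaxSubsliceAt G σ n t (t + 1) := by
    refine ⟨ht1n, ?_, ?_⟩
    · refine (slice_subset hL (by omega) (by omega) hσt1).ssubset_of_ne ?_
      intro he
      exact explored_not_mem (by omega) (he ▸ self_mem_slice hL ht)
    · rintro w' hw'n ⟨h1, h2⟩
      have hmw' : σ (t + 1) ∈ sliceAt G σ n w' := h1.subset (self_mem_slice hL ht1n)
      have hle : w' ≤ t + 1 := start_le hL ht1n hmw'
      rcases Nat.lt_or_ge w' (t + 1) with h | h
      · have : w' ≤ t := by omega
        exact h2.not_subset (nesting hL this (by omega) hmw' hσt1)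
      · have : w' = t + 1 := by omega
        subst this
        exact h1.ne rfl
  have heq : sliceAt G σ n (t + 1) = sliceAt G σ n (u i) :=
    maxEq hL hmax1 hmaxi hv₀1 hv₀
  have : σ (t + 1) ∈ sliceAt G σ n (u i) := heq ▸ self_mem_slice hL ht1n
  have hle : u i ≤ t + 1 := start_le hL ht1n this
  have h1 : t < u 1 := hu.2.2.1 1 le_rfl (by omega)
  have h2 : u 1 < u i := hu.2.1 1 i le_rfl hi1 hik
  omega

end Aux2

/-- if `N(x) ∩ S ≠ ∅` and the maximal subslice `S_i` (i > 1) contains a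
vertex with an incident active edge for `S`, then some vertex of an earlier maximal
subslice `S_ℓ` (ℓ < i) is universal to `S_i`. -/
theorem connected_subslice_has_universal_vertex {V : Type*} (G : SimpleGraph V)
    [DecidableRel G.Adj] (n : ℕ) (σ : ℕ → V) (hL : IsLBFS G n σ)
    (t : ℕ) (ht : t < n) (k : ℕ) (u : ℕ → ℕ) (hu : MaxSubsliceEnum G σ n t k u)
    (hx : G.neighborSet (σ t) ∩ sliceAt G σ n t ≠ ∅) :
    ∀ i, 1 < i → i ≤ k →
      (∃ v ∈ sliceAt G σ n (u i), ∃ w, activeFor G σ n t v w) →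
      ∃ ℓ, 1 ≤ ℓ ∧ ℓ < i ∧ ∃ y ∈ sliceAt G σ n (u ℓ),
        ∀ z ∈ sliceAt G σ n (u i), G.Adj y z := by
  classical
  intro i hi1 hik hex
  obtain ⟨v, hv, w, hadj, hvS, hwS, hno⟩ := hex
  have hmaxi : IsMaxSubsliceAt G σ n t (u i) := hu.1 i (by omega) hik
  have huin : u i < n := hmaxi.1
  have htui : t < u i := hu.2.2.1 i (by omega) hik
  have hSisub : sliceAt G σ n (u i) ⊆ sliceAt G σ n t := hmaxi.2.1.subset
  have hwSi : w ∉ sliceAt G σ n (u i) := fun hw => hno (u i) hmaxi ⟨hv, hw⟩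
  have hEqv_v : LbfsEqv G σ (u i) v (σ (u i)) := (label_eq_iff (le_of_lt huin)).1 hv.2
  have hσui_t : σ (u i) ∈ sliceAt G σ n t := hSisub (self_mem_slice hL huin)
  -- Step A: find a step strictly between `t` and `u i` adjacent to `σ (u i)`.
  have hA : ∃ r, t < r ∧ r < u i ∧ G.Adj (σ r) (σ (u i)) := by
    obtain ⟨s, hsIio, hsw⟩ := hL.1.2.2 (Set.mem_univ w)
    have hsn : s < n := hsIio
    have hts : t ≤ s := start_le hL hsn (hsw ▸ hwS)
    rcases eq_or_lt_of_le hts with rfl | hts'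
    · have h1 : G.Adj (σ t) v := by rw [hsw]; exact hadj.symm
      exact absurd h1 (fun h => lemC hL ht hu hi1 hik hv h)
    rcases Nat.lt_or_ge s (u i) with hslt | hsge
    · have h1 : G.Adj (σ s) v := by rw [hsw]; exact hadj.symm
      exact ⟨s, hts', hslt, (hEqv_v s hslt).1 h1⟩
    · have hwun : ∀ j < u i, σ j ≠ w := by
        intro j hj
        rw [← hsw]
        exact unexp hL hsn hsge j hj
      have hnE : ¬ LbfsEqv G σ (u i) w (σ (u i)) := by
        intro hE
        exact hwSi ⟨hwun, (label_eq_iff (le_of_lt huin)).2 hE⟩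
      have hexD : ∃ r, r < u i ∧ ¬(G.Adj (σ r) w ↔ G.Adj (σ r) (σ (u i))) := by
        by_contra hc
        push_neg at hc
        exact hnE fun j hj => (hc j hj)
      let r := Nat.find hexD
      obtain ⟨hrlt, hrne⟩ : r < u i ∧ ¬(G.Adj (σ r) w ↔ G.Adj (σ r) (σ (u i))) :=
        Nat.find_spec hexD
      have hEr : LbfsEqv G σ r w (σ (u i)) := by
        intro j hj
        have := Nat.find_min hexD hj
        push_neg at this
        exact this (by omega)
      have hAdjr : G.Adj (σ r) (σ (u i)) := by
        by_contra hcadj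
        have haw : G.Adj (σ r) w := by tauto
        have hlab : lbfsLabel G σ n r w = lbfsLabel G σ n r (σ (u i)) :=
          (label_eq_iff (by omega)).2 hEr
        have hlex : List.Lex (· < ·) (lbfsLabel G σ n (r + 1) (σ (u i)))
            (lbfsLabel G σ n (r + 1) w) := by
          rw [label_succ, label_succ, if_neg hcadj, if_pos haw, List.append_nil, ← hlab]
          exact lex_append_cons _ _ _
        have hlex2 := lex_label_mono (by omega : r + 1 ≤ u i) (le_of_lt huin) hlex
        have hopt := hL.2 (u i) huin w hwun
        rw [(self_mem_slice hL huin).2] at hopt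
        exact hopt hlex2
      have hEt : LbfsEqv G σ t w (σ (u i)) := by
        have h1 : lbfsLabel G σ n t w = lbfsLabel G σ n t (σ (u i)) := by
          rw [hwS.2, ← hσui_t.2]
        exact (label_eq_iff (le_of_lt ht)).1 h1
      have htr : t ≤ r := by
        by_contra hc
        exact hrne (hEt r (by omega))
      rcases eq_or_lt_of_le htr with rfl | htr'
      · exact absurd hAdjr (fun h => lemC hL ht hu hi1 hik (self_mem_slice hL huin) h)
      · exact ⟨r, htr', hrlt, hAdjr⟩
  -- Step B: locate the found vertex in an earlier maximal subslice.
  obtain ⟨r, htr, hrui, hAdjr⟩ := hA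
  have hrn : r < n := by omega
  have hσui_un : ∀ j < r, σ j ≠ σ (u i) := unexp hL huin (le_of_lt hrui)
  have hσr : σ r ∈ sliceAt G σ n t := persistence hL (by omega) hrn hσui_t hσui_un
  obtain ⟨ℓ, hℓ1, hℓk, hmem, hulr⟩ := maxCover hL ht hu htr hrn hσr
  have hℓi : ℓ < i := by
    by_contra hc
    push_neg at hc
    rcases eq_or_lt_of_le hc with rfl | hlt
    · omega
    · have := hu.2.1 i ℓ (by omega) hlt hℓk
      omega
  refine ⟨ℓ, hℓ1, hℓi, σ r, hmem, fun z hz => ?_⟩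
  have hEz : LbfsEqv G σ (u i) z (σ (u i)) := (label_eq_iff (le_of_lt huin)).1 hz.2
  exact (hEz r hrui).2 hAdjr
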